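/- Let R be a perfect commutative ring of characteristic p, and let h ≥ 1 and d ≥ 1 be integers. If x ∈ W(R) satisfies φ^h(x) = p^d·x, or satisfies p^d·φ^h(x) = x, then x = 0. Consequently, for every nonzero integer d, the only element x of the localization W(R)[1/p] with φ^h(x) = p^d·x is x = 0. -/

import Mathlib

open WittVector


section Aux

variable {p : ℕ} [hp : Fact p.Prime] {R : Type*} [CommRing R] [CharP R p]

private lemma aux_mul_pow_p_coeff (i : ℕ) :
    ∀ y : WittVector p R, (y * (p : WittVector p R) ^ (i + 1)).coeff i = 0 := by
  induction i with
  | zero => intro y; simpa using mul_charP_coeff_zero (p := p) y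
  | succ i ih =>
      intro y
      have e : y * (p : WittVector p R) ^ (i + 1 + 1)
          = (y * (p : WittVector p R) ^ (i + 1)) * (p : WittVector p R) := by ring
      rw [e, mul_charP_coeff_succ, ih, zero_pow hp.out.ne_zero]

private lemma aux_eq_zero_of_forall_dvd {x : WittVector p R}
    (hx : ∀ n : ℕ, (p : WittVector p R) ^ n ∣ x) : x = 0 := by
  ext n
  obtain ⟨y, hy⟩ := hx (n + 1)
  rw [hy, mul_comm, zero_coeff, aux_mul_pow_p_coeff]

private lemma aux_verschiebung_inj {x : WittVector p R} (hx : verschiebung x = 0) : x = 0 := by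
  ext n
  have := congrArg (fun z : WittVector p R => z.coeff (n + 1)) hx
  simpa [verschiebung_coeff_succ] using this

private lemma aux_p_nzd [PerfectRing R p] {x : WittVector p R}
    (hx : x * (p : WittVector p R) = 0) : x = 0 := by
  rw [← verschiebung_frobenius] at hx
  have h1 : frobenius x = (0 : WittVector p R) := aux_verschiebung_inj hx
  exact (frobenius_bijective p R).injective (by simpa using h1)

private lemma aux_part1 [PerfectRing R p] (h d : ℕ) (hd : 1 ≤ d) :
    ∀ x : WittVector p R,
      (⇑(frobenius : WittVector p R →+* WittVector p R))^[h] x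
        = (p : WittVector p R) ^ d * x → x = 0 := by
  set g : WittVector p R →+* WittVector p R := (frobeniusEquiv p R).symm.toRingHom with hg
  have hgf : Function.LeftInverse g (frobenius : WittVector p R → WittVector p R) := by
    intro y
    simpa [hg] using (frobeniusEquiv p R).symm_apply_apply y
  have hfg : Function.RightInverse g (frobenius : WittVector p R → WittVector p R) := by
    intro y
    simpa [hg] using (frobeniusEquiv p R).apply_symm_apply y
  intro x hx
  apply aux_eq_zero_of_forall_dvd
  intro n
  induction n generalizing x with
  | zero => simpa using one_dvd x
  | succ n ih =>
      set z := (⇑g)^[h] x with hz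
      have h1 : (⇑(frobenius : WittVector p R →+* WittVector p R))^[h] z = x :=
        hfg.iterate h x
      have h2 : x = (p : WittVector p R) ^ d * z := by
        have := congrArg (⇑g)^[h] hx
        have hfix : (⇑g)^[h] ((p : WittVector p R)) = (p : WittVector p R) :=
          Function.iterate_fixed (by simp) h
        rwa [hgf.iterate h x, iterate_map_mul, iterate_map_pow, hfix, ← hz] at this
      have h3 : (⇑(frobenius : WittVector p R →+* WittVector p R))^[h] z
          = (p : WittVector p R) ^ d * z := by rw [h1, h2]
      have h4 : (p : WittVector p R) ^ n ∣ z := ih z h3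
      rw [h2, pow_succ']
      exact mul_dvd_mul (dvd_pow_self _ (by omega)) h4

private lemma aux_part2 [PerfectRing R p] (h d : ℕ) (hd : 1 ≤ d) :
    ∀ x : WittVector p R,
      (p : WittVector p R) ^ d *
        (⇑(frobenius : WittVector p R →+* WittVector p R))^[h] x = x → x = 0 := by
  intro x hx
  apply aux_eq_zero_of_forall_dvd
  intro n
  induction n generalizing x with
  | zero => simpa using one_dvd x
  | succ n ih =>
      set w := (⇑(frobenius : WittVector p R →+* WittVector p R))^[h] x with hw
      have h3 : (p : WittVector p R) ^ d *
          (⇑(frobenius : WittVector p R →+* WittVector p R))^[h] w = w := by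
        have := congrArg (⇑(frobenius : WittVector p R →+* WittVector p R))^[h] hx
        have hfix : (⇑(frobenius : WittVector p R →+* WittVector p R))^[h] ((p : WittVector p R)) = (p : WittVector p R) :=
          Function.iterate_fixed (by simp) h
        rwa [iterate_map_mul, iterate_map_pow, hfix, ← hw] at this
      have h4 : (p : WittVector p R) ^ n ∣ w := ih w h3
      rw [← hx, pow_succ']
      exact mul_dvd_mul (dvd_pow_self _ (by omega)) h4

end Aux

/-- Let `R` be a perfect commutative ring of characteristic `p`, and
`h ≥ 1`, `d ≥ 1`.  Any `x ∈ W(R)` with `φ^h x = p^d · x`, or with `p^d · φ^h x = x`, is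
zero; consequently, in the localization `W(R)[1/p]` (with `Φ` the canonical extension of
the Frobenius `φ` and `u` the unit given by the image of `p`), the only solution of
`Φ^h x = p^e · x` with `e` a nonzero integer is `x = 0`. -/
theorem wittVector_frobenius_eigenvector_eq_zero
    {p : ℕ} [hp : Fact p.Prime] {R : Type*} [CommRing R] [CharP R p] [PerfectRing R p]
    (h d : ℕ) (hh : 1 ≤ h) (hd : 1 ≤ d)
    (A : Type*) [CommRing A] [Algebra (WittVector p R) A]
    [IsLocalization.Away ((p : WittVector p R)) A]
    (Φ : A →+* A)
    (hΦ : ∀ y : WittVector p R,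
      Φ (algebraMap (WittVector p R) A y) = algebraMap (WittVector p R) A (frobenius y))
    (u : Aˣ) (hu : (u : A) = algebraMap (WittVector p R) A (p : WittVector p R)) :
    (∀ x : WittVector p R, (⇑(frobenius : WittVector p R →+* WittVector p R))^[h] x
        = (p : WittVector p R) ^ d * x → x = 0) ∧
    (∀ x : WittVector p R, (p : WittVector p R) ^ d *
        (⇑(frobenius : WittVector p R →+* WittVector p R))^[h] x = x → x = 0) ∧
    (∀ e : ℤ, e ≠ 0 → ∀ x : A, (⇑Φ)^[h] x = (↑(u ^ e) : A) * x → x = 0) := by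
  refine ⟨aux_part1 h d hd, aux_part2 h d hd, ?_⟩
  have hinj : Function.Injective (algebraMap (WittVector p R) A) := by
    apply IsLocalization.injective A (M := Submonoid.powers ((p : WittVector p R)))
    intro s hs
    obtain ⟨n, rfl⟩ := hs
    refine pow_mem ?_ n
    rw [mem_nonZeroDivisors_iff_right]
    intro z hz
    exact aux_p_nzd hz
  intro e he x hx
  have hΦu : Φ (↑u) = ↑u := by rw [hu, hΦ]; simp
  have humap : Units.map (Φ : A →* A) u = u := Units.ext (by simpa using hΦu)
  have hΦue : Φ (↑(u ^ e)) = ↑(u ^ e) := by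
    have h2 : Units.map (Φ : A →* A) (u ^ e) = u ^ e := by rw [map_zpow, humap]
    calc Φ (↑(u ^ e)) = ↑(Units.map (Φ : A →* A) (u ^ e)) := (Units.coe_map _ _).symm
      _ = ↑(u ^ e) := by rw [h2]
  obtain ⟨⟨a, s⟩, hxs⟩ := IsLocalization.surj (Submonoid.powers ((p : WittVector p R))) x
  obtain ⟨n, hn⟩ := s.2
  simp only at hxs
  have hus : (algebraMap (WittVector p R) A) ↑s = (↑u) ^ n := by
    rw [← hn, map_pow, ← hu]
  have hsemi : Function.Semiconj (⇑(algebraMap (WittVector p R) A))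
      (⇑(frobenius : WittVector p R →+* WittVector p R)) ⇑Φ := fun y => (hΦ y).symm
  have hΦun : (⇑Φ)^[h] ((↑u : A) ^ n) = (↑u : A) ^ n :=
    Function.iterate_fixed (by rw [map_pow, hΦu]) h
  have key : algebraMap (WittVector p R) A
      ((⇑(frobenius : WittVector p R →+* WittVector p R))^[h] a)
      = (↑(u ^ e) : A) * algebraMap (WittVector p R) A a := by
    have k1 := (hsemi.iterate_right h) a
    rw [k1, ← hxs, hus, iterate_map_mul, hx, hΦun]
    ring
  have hxzero : algebraMap (WittVector p R) A a = 0 → x = 0 := by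
    intro ha
    rw [hus] at hxs
    rw [ha, ← Units.val_pow_eq_pow_val] at hxs
    rw [mul_comm] at hxs
    exact (Units.mul_right_eq_zero (u ^ n)).mp hxs
  rcases lt_or_gt_of_ne he with hneg | hpos
  · set m : ℕ := (-e).toNat with hm
    have hm1 : 1 ≤ m := by omega
    have hue : (u ^ e) = (u ^ m)⁻¹ := by
      have : e = -(m : ℤ) := by omega
      rw [this, zpow_neg, zpow_natCast]
    have key2 : algebraMap (WittVector p R) A ((p : WittVector p R) ^ m *
        (⇑(frobenius : WittVector p R →+* WittVector p R))^[h] a)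
        = algebraMap (WittVector p R) A a := by
      rw [map_mul, map_pow, ← hu, key, hue, ← Units.val_pow_eq_pow_val,
        ← mul_assoc, Units.mul_inv, one_mul]
    have ha : a = 0 := aux_part2 h m hm1 a (hinj key2)
    exact hxzero (by rw [ha, map_zero])
  · set m : ℕ := e.toNat with hm
    have hm1 : 1 ≤ m := by omega
    have hue : (↑(u ^ e) : A) = algebraMap (WittVector p R) A ((p : WittVector p R) ^ m) := by
      have : e = (m : ℤ) := by omega
      rw [this, zpow_natCast, Units.val_pow_eq_pow_val, hu, map_pow]
    have key2 : algebraMap (WittVector p R) A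
        ((⇑(frobenius : WittVector p R →+* WittVector p R))^[h] a)
        = algebraMap (WittVector p R) A ((p : WittVector p R) ^ m * a) := by
      rw [key, hue, map_mul]
    have ha : a = 0 := aux_part1 h m hm1 a (hinj key2)
    exact hxzero (by rw [ha, map_zero])
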